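/- Let k be an algebraically closed field of characteristic zero, V a finite-dimensional k-vector space with dim V ≥ 2, and B : V × V → k a nondegenerate symmetric bilinear form. Let x : V → V be a linear endomorphism that is skew-adjoint (B(x u, v) = −B(u, x v) for all u, v) and nilpotent. Then there exists a nonzero vector v ∈ V with x v = 0 and B(v, v) = 0. -/

import Mathlib

theorem exists_isotropic_aux (k V : Type*) [Field k] [IsAlgClosed k] [CharZero k]
    [AddCommGroup V] [Module k V] [FiniteDimensional k V]
    (hV : 2 ≤ Module.finrank k V)
    (B : LinearMap.BilinForm k V)
    (hsymm : ∀ u v : V, B u v = B v u) :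
    ∃ v : V, v ≠ 0 ∧ B v v = 0 := by
  have hsymm' : B.IsSymm := ⟨fun u v => by simpa using hsymm u v⟩
  haveI : Invertible (2 : k) := invertibleOfNonzero two_ne_zero
  obtain ⟨b, hb⟩ := LinearMap.BilinForm.exists_orthogonal_basis (LinearMap.BilinForm.isSymm_iff.mp hsymm')
  let i0 : Fin (Module.finrank k V) := ⟨0, by omega⟩
  let i1 : Fin (Module.finrank k V) := ⟨1, by omega⟩
  have hne : i0 ≠ i1 := by simp [i0, i1, Fin.ext_iff]
  have hortho : B (b i0) (b i1) = 0 := by have := hb hne; exact this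
  have horth' : B (b i1) (b i0) = 0 := by have := hb hne.symm; exact this
  by_cases h0 : B (b i0) (b i0) = 0
  · exact ⟨b i0, b.ne_zero i0, h0⟩
  by_cases h1 : B (b i1) (b i1) = 0
  · exact ⟨b i1, b.ne_zero i1, h1⟩
  obtain ⟨c, hc⟩ := IsAlgClosed.exists_pow_nat_eq
    (-(B (b i0) (b i0)) / (B (b i1) (b i1))) (n := 2) zero_lt_two
  refine ⟨b i0 + c • b i1, ?_, ?_⟩
  · intro h
    have h2 := congrArg (fun w => b.repr w i0) h
    simp [Finsupp.single_apply, (hne.symm : i1 ≠ i0)] at h2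
  · have hexp : B (b i0 + c • b i1) (b i0 + c • b i1)
        = B (b i0) (b i0) + c ^ 2 * B (b i1) (b i1) := by
      simp [map_add, hortho, horth']
      ring
    rw [hexp, hc]
    field_simp
    ring

/-- A nonzero skew-adjoint nilpotent endomorphism of a nondegenerate symmetric bilinear
space of dimension at least 2 kills some nonzero isotropic vector. -/
theorem statement3 (k V : Type*) [Field k] [IsAlgClosed k] [CharZero k]
    [AddCommGroup V] [Module k V] [FiniteDimensional k V]
    (hV : 2 ≤ Module.finrank k V)
    (B : LinearMap.BilinForm k V)
    (hsymm : ∀ u v : V, B u v = B v u)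
    (hnd : LinearMap.BilinForm.Nondegenerate B)
    (x : Module.End k V)
    (hskew : ∀ u v : V, B (x u) v = - B u (x v))
    (hnil : IsNilpotent x) :
    ∃ v : V, v ≠ 0 ∧ x v = 0 ∧ B v v = 0 := by
  haveI : Nontrivial V := by
    apply Module.nontrivial_of_finrank_pos (R := k); omega
  by_cases hx : x = 0
  · obtain ⟨v, hv, hBv⟩ := exists_isotropic_aux k V hV B hsymm
    exact ⟨v, hv, by simp [hx], hBv⟩
  · have key : ∀ (m : ℕ) (u w : V), B ((x ^ m) u) w = (-1 : k) ^ m * B u ((x ^ m) w) := by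
      intro m
      induction m with
      | zero => intro u w; simp
      | succ m ih =>
        intro u w
        have e1 : (x ^ (m + 1)) u = (x ^ m) (x u) := by rw [pow_succ]; rfl
        have e2 : x ((x ^ m) w) = (x ^ (m + 1)) w := by rw [pow_succ']; rfl
        rw [e1, ih, hskew, e2, pow_succ]
        ring
    classical
    have hex : ∃ m, x ^ m = 0 := hnil
    set m := Nat.find hex with hmdef
    have hm0 : x ^ m = 0 := Nat.find_spec hex
    have hm2 : 2 ≤ m := by
      by_contra h
      push_neg at h
      interval_cases m
      · obtain ⟨v, hv⟩ := exists_ne (0 : V)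
        have h3 := congrArg (fun f : Module.End k V => f v) hm0
        simp at h3
        exact hv h3
      · simp at hm0
        exact hx hm0
    have hmm : x ^ (m - 1) ≠ 0 := Nat.find_min hex (by omega)
    obtain ⟨u, hu⟩ : ∃ u, (x ^ (m - 1)) u ≠ 0 := by
      by_contra h
      push_neg at h
      exact hmm (LinearMap.ext h)
    refine ⟨(x ^ (m - 1)) u, hu, ?_, ?_⟩
    · have hmeq : (x ^ m) u = 0 := by rw [hm0]; simp
      have h4 : x ((x ^ (m - 1)) u) = (x ^ m) u := by
        conv_rhs => rw [show m = (m - 1) + 1 by omega]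
        rw [pow_succ']; rfl
      rw [h4, hmeq]
    · rw [key (m - 1) u ((x ^ (m - 1)) u)]
      have h5 : (x ^ (m - 1)) ((x ^ (m - 1)) u) = 0 := by
        rw [← Module.End.mul_apply, ← pow_add]
        have h6 : x ^ (m - 1 + (m - 1)) = 0 := by
          rw [show m - 1 + (m - 1) = m + (m - 2) by omega, pow_add, hm0, zero_mul]
        rw [h6]
        simp
      rw [h5]
      simp
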